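/- Let G ∼ G(n, 1/2) be partitioned into parts S_1, ..., S_p ⊆ V_o and T_1, ..., T_m ⊆ V_e (where V_o, V_e are the odd- and even-degree vertex sets), with the cross edges between S_1 ∪ ... ∪ S_p (excluding one designated set) and T_1 ∪ ... ∪ T_m (excluding one designated set) distributed as i.i.d. Bernoulli(1/2). Then for any fixed part S_i and any two distinct vertices u, v ∈ S_i, the probability that |N(u) ∩ T_j| ≡ |N(v) ∩ T_j| (mod 2) for all j = 1, ..., m is 2^{−m}. Consequently, by a union bound, the probability that some part S_i contains two vertices u ≠ v with matching neighborhood parities in every T_j is at most n^2 · 2^{−m}. -/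

import Mathlib

open scoped ENNReal
open Finset

section aux
variable {A B : Type*} [Fintype A] [DecidableEq A] [Fintype B] [DecidableEq B]

/-- the parity-difference additive hom -/
def myL (u v : A) {m : ℕ} (T : Fin m → Finset B) :
    (A → B → ZMod 2) →+ (Fin m → ZMod 2) where
  toFun f := fun j => ∑ b ∈ T j, (f u b + f v b)
  map_zero' := by funext j; simp
  map_add' f g := by
    funext j
    simp only [Pi.add_apply, ← Finset.sum_add_distrib]
    exact Finset.sum_congr rfl fun b _ => by ring

lemma myL_surj {m : ℕ} (u v : A) (huv : u ≠ v) (T : Fin m → Finset B)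
    (hT : ∀ i j, i ≠ j → Disjoint (T i) (T j)) (hTne : ∀ j, (T j).Nonempty) :
    Function.Surjective (myL u v T) := by
  intro s
  classical
  set f : A → B → ZMod 2 :=
    fun a b => if a = u then ∑ k, (if b = (hTne k).choose then s k else 0) else 0 with hf
  refine ⟨f, ?_⟩
  funext j
  have hsum : ∀ b, f u b + f v b = ∑ k, (if b = (hTne k).choose then s k else 0) := by
    intro b; simp [hf, huv.symm]
  simp only [myL, AddMonoidHom.coe_mk, ZeroHom.coe_mk]
  rw [Finset.sum_congr rfl fun b _ => hsum b, Finset.sum_comm]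
  have : ∀ k : Fin m, (∑ b ∈ T j, if b = (hTne k).choose then s k else 0)
      = if k = j then s j else 0 := by
    intro k
    rw [Finset.sum_ite_eq' (T j) ((hTne k).choose) (fun _ => s k)]
    by_cases hkj : k = j
    · subst hkj; simp [(hTne k).choose_spec]
    · rw [if_neg, if_neg hkj]
      exact fun hmem => Finset.disjoint_left.mp (hT k j hkj) (hTne k).choose_spec hmem
  simp_rw [this]
  simp

lemma myL_ker_card {m : ℕ} (u v : A) (huv : u ≠ v) (T : Fin m → Finset B)
    (hT : ∀ i j, i ≠ j → Disjoint (T i) (T j)) (hTne : ∀ j, (T j).Nonempty) :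
    Nat.card {f : A → B → ZMod 2 // myL u v T f = 0} * 2 ^ m
      = Fintype.card (A → B → ZMod 2) := by
  classical
  have h1 : Nat.card (A → B → ZMod 2)
      = Nat.card ((A → B → ZMod 2) ⧸ (myL u v T).ker) * Nat.card (myL u v T).ker :=
    AddSubgroup.card_eq_card_quotient_mul_card_addSubgroup _
  have h2 : Nat.card ((A → B → ZMod 2) ⧸ (myL u v T).ker) = 2 ^ m := by
    rw [Nat.card_congr (QuotientAddGroup.quotientKerEquivOfSurjective _
      (myL_surj u v huv T hT hTne)).toEquiv]
    simp [Nat.card_eq_fintype_card, ZMod.card]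
  have h3 : Nat.card {f : A → B → ZMod 2 // myL u v T f = 0} = Nat.card (myL u v T).ker := by
    apply Nat.card_congr
    exact Equiv.subtypeEquivRight fun f => by simp [AddMonoidHom.mem_ker]
  rw [h3, ← Nat.card_eq_fintype_card, h1, h2, mul_comm]

end aux

section meas
open MeasureTheory

lemma unif_meas {α : Type*} [Fintype α] [Nonempty α] (s : Set α) :
    (PMF.uniformOfFintype α).toOuterMeasure s
      = (Nat.card s : ℝ≥0∞) * (Fintype.card α : ℝ≥0∞)⁻¹ := by
  classical
  rw [PMF.toOuterMeasure_apply_fintype]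
  simp only [PMF.uniformOfFintype_apply, Set.indicator_apply]
  simp_rw [← Set.mem_toFinset]
  rw [Finset.sum_ite_mem, Finset.univ_inter, Finset.sum_const, nsmul_eq_mul]
  congr 1
  rw [Set.toFinset_card, Nat.card_eq_fintype_card]

end meas

section main
variable {A B : Type*} [Fintype A] [DecidableEq A] [Fintype B] [DecidableEq B]

def boolZ : Bool ≃ ZMod 2 where
  toFun b := if b then 1 else 0
  invFun z := z = 1
  left_inv b := by cases b <;> decide
  right_inv z := by fin_cases z <;> rfl

def eqvZ : (A → B → Bool) ≃ (A → B → ZMod 2) :=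
  Equiv.piCongrRight fun _ => Equiv.piCongrRight fun _ => boolZ

lemma cond_iff {m : ℕ} (u v : A) (T : Fin m → Finset B) (g : A → B → Bool) :
    (∀ j, ((T j).filter fun b => g u b).card % 2 = ((T j).filter fun b => g v b).card % 2)
      ↔ myL u v T (eqvZ g) = 0 := by
  classical
  rw [funext_iff]
  apply forall_congr'
  intro j
  have hL : myL u v T (eqvZ g) j
      = (((T j).filter fun b => g u b).card : ZMod 2)
        + (((T j).filter fun b => g v b).card : ZMod 2) := by
    simp only [myL, AddMonoidHom.coe_mk, ZeroHom.coe_mk]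
    rw [Finset.sum_add_distrib]
    congr 1 <;>
    · rw [← Finset.sum_boole]
      exact Finset.sum_congr rfl fun b _ => by
        simp [eqvZ, boolZ, Equiv.piCongrRight]
  rw [hL, Pi.zero_apply, add_eq_zero_iff_eq_neg, CharTwo.neg_eq,
    ZMod.natCast_eq_natCast_iff']

lemma prob_eq {m : ℕ} (u v : A) (huv : u ≠ v) (T : Fin m → Finset B)
    (hT : ∀ i j, i ≠ j → Disjoint (T i) (T j)) (hTne : ∀ j, (T j).Nonempty) :
    (PMF.uniformOfFintype (A → B → Bool)).toOuterMeasure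
        {g | ∀ j : Fin m,
          ((T j).filter fun b => g u b).card % 2 = ((T j).filter fun b => g v b).card % 2}
      = (1 / 2 : ℝ≥0∞) ^ m := by
  classical
  rw [unif_meas]
  have hcard : Nat.card {g : A → B → Bool | ∀ j : Fin m,
      ((T j).filter fun b => g u b).card % 2 = ((T j).filter fun b => g v b).card % 2}
      * 2 ^ m = Fintype.card (A → B → Bool) := by
    have e1 : Nat.card {g : A → B → Bool | ∀ j : Fin m,
        ((T j).filter fun b => g u b).card % 2 = ((T j).filter fun b => g v b).card % 2}
        = Nat.card {f : A → B → ZMod 2 // myL u v T f = 0} :=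
      Nat.card_congr (Equiv.subtypeEquiv eqvZ fun g => cond_iff u v T g)
    rw [e1, myL_ker_card u v huv T hT hTne]
    exact (Fintype.card_congr eqvZ).symm
  set k := Nat.card {g : A → B → Bool | ∀ j : Fin m,
      ((T j).filter fun b => g u b).card % 2 = ((T j).filter fun b => g v b).card % 2}
  have hN : (Fintype.card (A → B → Bool) : ℝ≥0∞) = (k : ℝ≥0∞) * 2 ^ m := by
    rw [← hcard]; push_cast; ring
  have hk0 : (k : ℝ≥0∞) ≠ 0 := by
    intro h
    have : Fintype.card (A → B → Bool) = 0 := by rw [← hcard]; simp [Nat.cast_eq_zero.mp h]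
    exact Fintype.card_ne_zero this
  rw [hN, ENNReal.mul_inv (Or.inl hk0) (Or.inl (ENNReal.natCast_ne_top k)),
    ← mul_assoc, ENNReal.mul_inv_cancel hk0 (ENNReal.natCast_ne_top k), one_mul,
    one_div, ENNReal.inv_pow]

end main

open MeasureTheory

/-- let the cross edges between vertex sets `A` and `B` be i.i.d.
Bernoulli(1/2) (i.e. a uniformly random `g : A → B → Bool`).  Let `S 1, …, S p` be
pairwise disjoint subsets of `A` and `T 1, …, T m` pairwise disjoint nonempty
subsets of `B`.  Then for any part `S i` and distinct `u, v ∈ S i`, the probability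
that `|N(u) ∩ T j| ≡ |N(v) ∩ T j| (mod 2)` for every `j` is exactly `2^{−m}`; and,
by a union bound, the probability that some part contains two distinct vertices
with matching neighborhood parities in every `T j` is at most `n² · 2^{−m}`
(where `n ≥ |A|`). -/
theorem stmt_16 {A B : Type*} [Fintype A] [DecidableEq A] [Fintype B] [DecidableEq B]
    (p m n : ℕ) (S : Fin p → Finset A) (T : Fin m → Finset B)
    (hS : ∀ i j, i ≠ j → Disjoint (S i) (S j))
    (hT : ∀ i j, i ≠ j → Disjoint (T i) (T j))
    (hTne : ∀ j, (T j).Nonempty)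
    (hn : Fintype.card A ≤ n) :
    (∀ i : Fin p, ∀ u ∈ S i, ∀ v ∈ S i, u ≠ v →
      (PMF.uniformOfFintype (A → B → Bool)).toOuterMeasure
          {g | ∀ j : Fin m,
            ((T j).filter fun b => g u b).card % 2 = ((T j).filter fun b => g v b).card % 2}
        = (1 / 2 : ℝ≥0∞) ^ m) ∧
    (PMF.uniformOfFintype (A → B → Bool)).toOuterMeasure
        {g | ∃ i : Fin p, ∃ u ∈ S i, ∃ v ∈ S i, u ≠ v ∧ ∀ j : Fin m,
          ((T j).filter fun b => g u b).card % 2 = ((T j).filter fun b => g v b).card % 2}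
      ≤ (n : ℝ≥0∞) ^ 2 * (1 / 2 : ℝ≥0∞) ^ m := by
  constructor
  · intro i u _ v _ huv
    exact prob_eq u v huv T hT hTne
  · set μ := (PMF.uniformOfFintype (A → B → Bool)).toOuterMeasure
    set F : A × A → Set (A → B → Bool) := fun q =>
      {g | q.1 ≠ q.2 ∧ (∃ i, q.1 ∈ S i ∧ q.2 ∈ S i) ∧ ∀ j : Fin m,
        ((T j).filter fun b => g q.1 b).card % 2 = ((T j).filter fun b => g q.2 b).card % 2}
    have hsub : {g : A → B → Bool | ∃ i : Fin p, ∃ u ∈ S i, ∃ v ∈ S i, u ≠ v ∧ ∀ j : Fin m,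
          ((T j).filter fun b => g u b).card % 2 = ((T j).filter fun b => g v b).card % 2}
        ⊆ ⋃ q : A × A, F q := by
      rintro g ⟨i, u, hu, v, hv, huv, hcond⟩
      exact Set.mem_iUnion.mpr ⟨(u, v), huv, ⟨i, hu, hv⟩, hcond⟩
    have hF : ∀ q : A × A, μ (F q) ≤ (1 / 2 : ℝ≥0∞) ^ m := by
      rintro ⟨u, v⟩
      by_cases huv : u ≠ v
      · calc μ (F (u, v)) ≤ μ {g | ∀ j : Fin m,
            ((T j).filter fun b => g u b).card % 2 = ((T j).filter fun b => g v b).card % 2} :=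
              measure_mono fun g hg => hg.2.2
          _ = (1 / 2 : ℝ≥0∞) ^ m := prob_eq u v huv T hT hTne
      · have : F (u, v) = ∅ := by
          ext g; simp only [F, Set.mem_setOf_eq, Set.mem_empty_iff_false, iff_false]
          tauto
        simp [this]
    calc μ _ ≤ μ (⋃ q : A × A, F q) := measure_mono hsub
      _ ≤ ∑' q : A × A, μ (F q) := measure_iUnion_le F
      _ ≤ ∑' _ : A × A, (1 / 2 : ℝ≥0∞) ^ m := ENNReal.tsum_le_tsum hF
      _ = (Fintype.card (A × A)) * (1 / 2 : ℝ≥0∞) ^ m := by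
          rw [tsum_fintype, Finset.sum_const, Finset.card_univ, nsmul_eq_mul]
      _ ≤ (n : ℝ≥0∞) ^ 2 * (1 / 2 : ℝ≥0∞) ^ m := by
          gcongr
          rw [Fintype.card_prod, sq]
          push_cast
          exact mul_le_mul' (Nat.cast_le.mpr hn) (Nat.cast_le.mpr hn)
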